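/- Suppose ρ ∈ K(κ,λ) and ρ ≥ d̄_κ. Then I_{κ,λ}⁺ ↛_κ [I_{κ,λ}⁺]_ρ²: there exist F : [P_κ(λ)]_κ² → ρ and A ∈ I_{κ,λ}⁺ such that F''[B]_κ² = ρ for every B ∈ I_{κ,λ}⁺ ∩ P(A). -/

import Mathlib

open Cardinal Set

namespace PaperFormal

noncomputable section

/-- The least (small) cardinality of a family `F : Set X` satisfying `P`. -/
def leastCard {X : Type 1} (P : Set X → Prop) : Cardinal.{0} :=
  sInf {c : Cardinal.{0} | ∃ F : Set X, P F ∧ Cardinal.lift.{1} c = #F}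

/-- The collection of (codings of) functions from `κ` to `κ`. -/
def funOn (κ : Cardinal.{0}) : Set (Ordinal.{0} → Ordinal.{0}) :=
  {f | ∀ α < κ.ord, f α < κ.ord}

/-- The unequality number `U_κ`. -/
def uneq (κ : Cardinal.{0}) : Cardinal.{0} :=
  leastCard fun F : Set (Ordinal.{0} → Ordinal.{0}) => F ⊆ funOn κ ∧
    ∀ g ∈ funOn κ, ∃ f ∈ F, {α | α < κ.ord ∧ f α = g α} = ∅

/-- The dominating number `d_κ`. -/
def domNum (κ : Cardinal.{0}) : Cardinal.{0} :=
  leastCard fun F : Set (Ordinal.{0} → Ordinal.{0}) => F ⊆ funOn κ ∧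
    ∀ g ∈ funOn κ, ∃ f ∈ F, ∀ α < κ.ord, g α < f α

/-- The number `d̄_κ`. -/
def domBar (κ : Cardinal.{0}) : Cardinal.{0} :=
  leastCard fun X : Set (Ordinal.{0} → Ordinal.{0}) => X ⊆ funOn κ ∧
    ∀ g ∈ funOn κ, ∃ x ⊆ X, x.Nonempty ∧ #x < Cardinal.lift.{1} κ ∧
      ∀ α < κ.ord, g α < sSup {o | ∃ f ∈ x, f α = o}

/-- The generalized Cantor space `^ρ2`, with points coded as subsets of `Iio ρ.ord`. -/
def cantor (ρ : Cardinal.{0}) : Set (Set Ordinal.{0}) := {x | x ⊆ Iio ρ.ord}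

/-- A forcing condition: a pair `(a, t)` with `t ⊆ a ⊆ Iio ρ.ord` and `|a| < ν`. -/
def IsCond (ν ρ : Cardinal.{0}) (a t : Set Ordinal.{0}) : Prop :=
  a ⊆ Iio ρ.ord ∧ t ⊆ a ∧ #a < Cardinal.lift.{1} ν

/-- The basic open set determined by a condition. -/
def basicOpen (ρ : Cardinal.{0}) (a t : Set Ordinal.{0}) : Set (Set Ordinal.{0}) :=
  {x | x ⊆ Iio ρ.ord ∧ x ∩ a = t}

/-- Dense open subsets of `^ρ2` (for the `<ν`-support topology). -/
def DenseOpen (ν ρ : Cardinal.{0}) (D : Set (Set Ordinal.{0})) : Prop :=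
  D ⊆ cantor ρ ∧
  (∀ x ∈ D, ∃ a t, IsCond ν ρ a t ∧ x ∈ basicOpen ρ a t ∧ basicOpen ρ a t ⊆ D) ∧
  (∀ a t, IsCond ν ρ a t → (basicOpen ρ a t ∩ D).Nonempty)

/-- Members of `M_{ν,ρ}`. -/
def Meager (ν ρ : Cardinal.{0}) (W : Set (Set Ordinal.{0})) : Prop :=
  W ⊆ cantor ρ ∧ ∃ X : Set (Set (Set Ordinal.{0})), X.Nonempty ∧
    #X ≤ Cardinal.lift.{1} ν ∧ (∀ D ∈ X, DenseOpen ν ρ D) ∧ W ∩ ⋂₀ X = ∅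

/-- The covering number for category `cov(M_{ν,ρ})`. -/
def covM (ν ρ : Cardinal.{0}) : Cardinal.{0} :=
  leastCard fun Y : Set (Set (Set Ordinal.{0})) =>
    (∀ W ∈ Y, Meager ν ρ W) ∧ ⋃₀ Y = cantor ρ

/-- A (`κ`-complete) ideal on `κ`. -/
structure IdealK (κ : Cardinal.{0}) where
  mem : Set (Set Ordinal.{0})
  subset_iio : ∀ A ∈ mem, A ⊆ Iio κ.ord
  singleton_mem : ∀ α < κ.ord, {α} ∈ mem
  subset_mem : ∀ A ∈ mem, ∀ B ⊆ A, B ∈ mem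
  sUnion_mem : ∀ X : Set (Set Ordinal.{0}), X ⊆ mem → #X < Cardinal.lift.{1} κ → ⋃₀ X ∈ mem
  ne_top : Iio κ.ord ∉ mem

/-- `J⁺`, the sets (⊆ κ) not in the ideal. -/
def IdealK.plus {κ : Cardinal.{0}} (J : IdealK κ) : Set (Set Ordinal.{0}) :=
  {A | A ⊆ Iio κ.ord ∧ A ∉ J.mem}

/-- `cof(J)`. -/
def IdealK.cof {κ : Cardinal.{0}} (J : IdealK κ) : Cardinal.{0} :=
  leastCard fun X : Set (Set Ordinal.{0}) =>
    X ⊆ J.mem ∧ ∀ A, A ∈ J.mem ↔ ∃ B ∈ X, A ⊆ B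

/-- `cof̄(J)`. -/
def IdealK.cofBar {κ : Cardinal.{0}} (J : IdealK κ) : Cardinal.{0} :=
  leastCard fun X : Set (Set Ordinal.{0}) =>
    X ⊆ J.mem ∧ ∀ A ∈ J.mem, ∃ x ⊆ X, #x < Cardinal.lift.{1} κ ∧ A ⊆ ⋃₀ x

/-- `non_κ(P)`. -/
def nonK (κ : Cardinal.{0}) (P : IdealK κ → Prop) : Cardinal.{0} :=
  sInf {c | ∃ J : IdealK κ, J.cof = c ∧ ¬ P J}

/-- `non̄_κ(P)`. -/
def nonBarK (κ : Cardinal.{0}) (P : IdealK κ → Prop) : Cardinal.{0} :=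
  sInf {c | ∃ J : IdealK κ, J.cofBar = c ∧ ¬ P J}

/-- Weak `P`-point. -/
def WeakPPoint {κ : Cardinal.{0}} (J : IdealK κ) : Prop :=
  ∀ A ∈ J.plus, ∀ f : Ordinal.{0} → Ordinal.{0},
    (∀ α ∈ A, f α < κ.ord) → (∀ β, {α ∈ A | f α = β} ∈ J.mem) →
    ∃ B ∈ J.plus, B ⊆ A ∧ ∀ β, #{α ∈ B | f α = β} < Cardinal.lift.{1} κ

/-- Weak `Q`-point. -/
def WeakQPoint {κ : Cardinal.{0}} (J : IdealK κ) : Prop :=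
  ∀ A ∈ J.plus, ∀ g ∈ funOn κ,
    ∃ B ∈ J.plus, B ⊆ A ∧ ∀ α ∈ B, ∀ β ∈ B, α < β → g α < β

/-- Weakly selective ideal. -/
def WeaklySelective {κ : Cardinal.{0}} (J : IdealK κ) : Prop :=
  WeakPPoint J ∧ WeakQPoint J

/-- Weak semi-`Q`-point. -/
def WeakSemiQPoint {κ : Cardinal.{0}} (J : IdealK κ) : Prop :=
  ∀ A ∈ J.plus, ∀ f : Ordinal.{0} → Ordinal.{0},
    (∀ α ∈ A, f α < κ.ord) →
    (∀ β, #{α ∈ A | f α = β} < Cardinal.lift.{1} κ) →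
    ∃ C ∈ J.plus, C ⊆ A ∧ ∀ β < κ.ord, #{α ∈ C | f α = β} ≤ Cardinal.lift.{1} β.card

/-- `P_κ(λ)`, coded as the small subsets of `Iio λ.ord`. -/
def smallSet (κ lam : Cardinal.{0}) : Set (Set Ordinal.{0}) :=
  {a | a ⊆ Iio lam.ord ∧ #a < Cardinal.lift.{1} κ}

/-- The ideal `I_{κ,λ}` of noncofinal subsets of `P_κ(λ)`. -/
def Ikl (κ lam : Cardinal.{0}) : Set (Set (Set Ordinal.{0})) :=
  {A | A ⊆ smallSet κ lam ∧ ∃ a ∈ smallSet κ lam, ∀ b ∈ A, ¬ a ⊆ b}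

/-- A (`κ`-complete fine) ideal on `P_κ(λ)`. -/
structure IdealP (κ lam : Cardinal.{0}) where
  mem : Set (Set (Set Ordinal.{0}))
  subset_pk : ∀ A ∈ mem, A ⊆ smallSet κ lam
  fine : Ikl κ lam ⊆ mem
  subset_mem : ∀ A ∈ mem, ∀ B ⊆ A, B ∈ mem
  sUnion_mem : ∀ X : Set (Set (Set Ordinal.{0})), X ⊆ mem →
    #X < Cardinal.lift.{1} κ → ⋃₀ X ∈ mem
  ne_top : smallSet κ lam ∉ mem

/-- `H⁺` computed from the underlying collection `Hm` of an ideal on `P_κ(λ)`. -/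
def plusOf (κ lam : Cardinal.{0}) (Hm : Set (Set (Set Ordinal.{0}))) :
    Set (Set (Set Ordinal.{0})) :=
  {A | A ⊆ smallSet κ lam ∧ A ∉ Hm}

/-- `H⁺`. -/
def IdealP.plus {κ lam : Cardinal.{0}} (H : IdealP κ lam) : Set (Set (Set Ordinal.{0})) :=
  plusOf κ lam H.mem

/-- `cof(H)`. -/
def IdealP.cof {κ lam : Cardinal.{0}} (H : IdealP κ lam) : Cardinal.{0} :=
  leastCard fun X : Set (Set (Set Ordinal.{0})) =>
    X ⊆ H.mem ∧ ∀ A, A ∈ H.mem ↔ ∃ B ∈ X, A ⊆ B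

/-- `cof̄(H)`. -/
def IdealP.cofBar {κ lam : Cardinal.{0}} (H : IdealP κ lam) : Cardinal.{0} :=
  leastCard fun X : Set (Set (Set Ordinal.{0})) =>
    X ⊆ H.mem ∧ ∀ A ∈ H.mem, ∃ x ⊆ X, #x < Cardinal.lift.{1} κ ∧ A ⊆ ⋃₀ x

/-- `d^κ_{κ,λ}`. -/
def domP (κ lam : Cardinal.{0}) : Cardinal.{0} :=
  leastCard fun F : Set (Ordinal.{0} → Set Ordinal.{0}) =>
    (∀ f ∈ F, ∀ α < κ.ord, f α ∈ smallSet κ lam) ∧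
    ∀ g : Ordinal.{0} → Set Ordinal.{0}, (∀ α < κ.ord, g α ∈ smallSet κ lam) →
      ∃ f ∈ F, ∀ α < κ.ord, g α ⊆ f α

/-- A maximal almost disjoint family of size `≥ κ` for `H` (a member of `M_H^{≥κ}`). -/
def IsMad {κ lam : Cardinal.{0}} (H : IdealP κ lam) (Q : Set (Set (Set Ordinal.{0}))) : Prop :=
  Q ⊆ H.plus ∧ Cardinal.lift.{1} κ ≤ #Q ∧
  (∀ A ∈ Q, ∀ B ∈ Q, A ≠ B → A ∩ B ∈ H.mem) ∧
  ∀ C ∈ H.plus, ∃ A ∈ Q, A ∩ C ∈ H.plus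

/-- The (small) cardinal `c` with `lift c = c'`, used to pull `λ^{<κ} = |P_κ(λ)|` down. -/
def downCard (c : Cardinal.{1}) : Cardinal.{0} :=
  sInf {d : Cardinal.{0} | Cardinal.lift.{1} d = c}

open Classical in
/-- The number `a_H`. -/
def aNum {κ lam : Cardinal.{0}} (H : IdealP κ lam) : Cardinal.{0} :=
  if ∃ Q, IsMad H Q then sInf {c | ∃ Q, IsMad H Q ∧ Cardinal.lift.{1} c = #Q}
  else 2 ^ Order.succ (downCard #(smallSet κ lam))

/-- Weak `π`-point. -/
def WeakPiPoint {κ lam : Cardinal.{0}} (H : IdealP κ lam) : Prop :=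
  ∀ f : Ordinal.{0} → Set (Set Ordinal.{0}), (∀ α < κ.ord, f α ∈ H.mem) →
    ∀ A ∈ H.plus, ∃ B ∈ H.plus, B ⊆ A ∧ ∀ α < κ.ord, B ∩ f α ∈ Ikl κ lam

/-- `∪(a ∩ κ)`. -/
def supK (κ : Cardinal.{0}) (a : Set Ordinal.{0}) : Ordinal.{0} :=
  sSup (a ∩ Iio κ.ord)

/-- The relation `a ≺ b`. -/
def prec (κ : Cardinal.{0}) (a b : Set Ordinal.{0}) : Prop :=
  a ⊆ b ∧ supK κ a < supK κ b

/-- `[A]_κ²`. -/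
def pairsK (κ : Cardinal.{0}) (A : Set (Set Ordinal.{0})) : Set (Ordinal.{0} × Set Ordinal.{0}) :=
  {p | ∃ a ∈ A, ∃ b ∈ A, supK κ a < supK κ b ∧ p = (supK κ a, b)}

/-- `[A]_≺²`. -/
def pairsPrec (κ : Cardinal.{0}) (A : Set (Set Ordinal.{0})) :
    Set (Ordinal.{0} × Set Ordinal.{0}) :=
  {p | ∃ a ∈ A, ∃ b ∈ A, prec κ a b ∧ p = (supK κ a, b)}

/-- `[A]_{κ,κ}²`. -/
def pairsKK (κ : Cardinal.{0}) (A : Set (Set Ordinal.{0})) : Set (Ordinal.{0} × Ordinal.{0}) :=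
  {p | ∃ a ∈ A, ∃ b ∈ A, supK κ a < supK κ b ∧ p = (supK κ a, supK κ b)}

/-- `S` is a set of ordinals of order type `α`. -/
def OrdType (S : Set Ordinal.{0}) (α : Ordinal.{0}) : Prop :=
  ∃ e : Ordinal.{0} → Ordinal.{0},
    (∀ i < α, ∀ j < α, i < j → e i < e j) ∧ e '' Iio α = S

/-- `(B, ≺)` has order type `α`. -/
def OrdTypePrec (κ : Cardinal.{0}) (B : Set (Set Ordinal.{0})) (α : Ordinal.{0}) : Prop :=
  ∃ e : Ordinal.{0} → Set Ordinal.{0},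
    (∀ i < α, ∀ j < α, i < j → prec κ (e i) (e j)) ∧ e '' Iio α = B

/-- The partition relation `κ → (κ, θ)²`. -/
def ArrowKTheta (κ : Cardinal.{0}) (θ : Ordinal.{0}) : Prop :=
  ∀ f : Ordinal.{0} → Ordinal.{0} → Fin 2, ∃ A ⊆ Iio κ.ord,
    (OrdType A κ.ord ∧ ∀ α ∈ A, ∀ β ∈ A, α < β → f α β = 0) ∨
    (OrdType A θ ∧ ∀ α ∈ A, ∀ β ∈ A, α < β → f α β = 1)

/-- `κ` is weakly compact. -/
def WeaklyCompact (κ : Cardinal.{0}) : Prop :=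
  ∀ f : Ordinal.{0} → Ordinal.{0} → Fin 2, ∃ A ⊆ Iio κ.ord,
    OrdType A κ.ord ∧ ∃ i, ∀ α ∈ A, ∀ β ∈ A, α < β → f α β = i

/-- The partition relation `J⁺ → (J⁺, α)²` for an ideal on `κ`. -/
def ArrowJ {κ : Cardinal.{0}} (J : IdealK κ) (α : Ordinal.{0}) : Prop :=
  ∀ A ∈ J.plus, ∀ f : Ordinal.{0} → Ordinal.{0} → Fin 2,
    ∃ B ⊆ A, (B ∈ J.plus ∧ ∀ β ∈ B, ∀ γ ∈ B, β < γ → f β γ = 0) ∨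
             (OrdType B α ∧ ∀ β ∈ B, ∀ γ ∈ B, β < γ → f β γ = 1)

/-- The square bracket relation `J⁺ → [J⁺]_ρ²` for an ideal on `κ`. -/
def SqBrJ {κ : Cardinal.{0}} (J : IdealK κ) (ρ : Cardinal.{0}) : Prop :=
  ∀ A ∈ J.plus, ∀ f : Ordinal.{0} → Ordinal.{0} → Ordinal.{0},
    (∀ β ∈ A, ∀ γ ∈ A, β < γ → f β γ < ρ.ord) →
    ∃ B ∈ J.plus, B ⊆ A ∧ {ξ | ∃ β ∈ B, ∃ γ ∈ B, β < γ ∧ f β γ = ξ} ≠ Iio ρ.ord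

/-- `H⁺ →_κ (H⁺, α)²`. -/
def ArrowP (κ lam : Cardinal.{0}) (Hm : Set (Set (Set Ordinal.{0}))) (α : Ordinal.{0}) : Prop :=
  ∀ F : Ordinal.{0} → Set Ordinal.{0} → Fin 2, ∀ A ∈ plusOf κ lam Hm,
    ∃ B ⊆ A, (B ∈ plusOf κ lam Hm ∧ ∀ p ∈ pairsK κ B, F p.1 p.2 = 0) ∨
             (OrdTypePrec κ B α ∧ ∀ p ∈ pairsK κ B, F p.1 p.2 = 1)

/-- `H⁺ →_{κ,κ} (H⁺, α)²`. -/
def ArrowPKK (κ lam : Cardinal.{0}) (Hm : Set (Set (Set Ordinal.{0}))) (α : Ordinal.{0}) : Prop :=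
  ∀ F : Ordinal.{0} → Ordinal.{0} → Fin 2, ∀ A ∈ plusOf κ lam Hm,
    ∃ B ⊆ A, (B ∈ plusOf κ lam Hm ∧ ∀ p ∈ pairsKK κ B, F p.1 p.2 = 0) ∨
             (OrdTypePrec κ B α ∧ ∀ p ∈ pairsKK κ B, F p.1 p.2 = 1)

/-- `H⁺ →_{κ,κ} (H⁺; α)²`. -/
def ArrowPKKsemi (κ lam : Cardinal.{0}) (Hm : Set (Set (Set Ordinal.{0}))) (α : Ordinal.{0}) :
    Prop :=
  ∀ F : Ordinal.{0} → Ordinal.{0} → Fin 2, ∀ A ∈ plusOf κ lam Hm,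
    ∃ B ⊆ A, (B ∈ plusOf κ lam Hm ∧ ∀ p ∈ pairsKK κ B, F p.1 p.2 = 0) ∨
             (OrdType {o | ∃ a ∈ B, supK κ a = o} α ∧ ∀ p ∈ pairsKK κ B, F p.1 p.2 = 1)

/-- `H⁺ →_κ (H⁺)²`. -/
def ArrowPConst (κ lam : Cardinal.{0}) (Hm : Set (Set (Set Ordinal.{0}))) : Prop :=
  ∀ F : Ordinal.{0} → Set Ordinal.{0} → Fin 2, ∀ A ∈ plusOf κ lam Hm,
    ∃ B ∈ plusOf κ lam Hm, B ⊆ A ∧ ∃ i, ∀ p ∈ pairsK κ B, F p.1 p.2 = i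

/-- `H⁺ →_{κ,κ} [H⁺]_ρ²`. -/
def SqBrPKK (κ lam : Cardinal.{0}) (Hm : Set (Set (Set Ordinal.{0}))) (ρ : Cardinal.{0}) : Prop :=
  ∀ F : Ordinal.{0} → Ordinal.{0} → Ordinal.{0},
    (∀ α β : Ordinal.{0}, α < β → β < κ.ord → F α β < ρ.ord) →
    ∀ A ∈ plusOf κ lam Hm, ∃ B ∈ plusOf κ lam Hm, B ⊆ A ∧
      {ξ | ∃ p ∈ pairsKK κ B, F p.1 p.2 = ξ} ≠ Iio ρ.ord

/-- The class `K(κ,λ)`. -/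
def Kset (κ lam : Cardinal.{0}) : Set Cardinal.{0} :=
  {σ | lam ≤ σ ∧ ∃ T ⊆ smallSet κ lam, Cardinal.lift.{1} σ = #T ∧
    ∀ a ∈ smallSet κ lam, #{t ∈ T | t ⊆ a} < Cardinal.lift.{1} κ}

end

end PaperFormal

namespace PaperFormal

noncomputable section Aux17

open Classical

/-- Small sets of ordinals bounded below `κ.ord` have sup below `κ.ord`, for regular `κ`. -/
lemma aux_sSup_lt_ord {κ : Cardinal.{0}} (hreg : κ.IsRegular) {s : Set Ordinal.{0}}
    (hs : #s < Cardinal.lift.{1} κ) (hb : ∀ o ∈ s, o < κ.ord) : sSup s < κ.ord := by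
  have hsub : s ⊆ Iio κ.ord := fun o ho => hb o ho
  haveI : Small.{0} s := small_subset hsub
  have hrange : Set.range (fun i : Shrink.{0} s => (((equivShrink s).symm i : s) : Ordinal)) = s := by
    ext o
    constructor
    · rintro ⟨i, rfl⟩; exact ((equivShrink s).symm i).2
    · intro ho; exact ⟨equivShrink s ⟨o, ho⟩, by simp⟩
  have h1 : sSup s = ⨆ i : Shrink.{0} s, (((equivShrink s).symm i : s) : Ordinal) := by
    rw [iSup, hrange]
  rw [h1]
  refine Cardinal.iSup_lt_ord_of_isRegular hreg ?_ (fun i => hb _ ((equivShrink s).symm i).2)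
  have h2 : Cardinal.lift.{1} #(Shrink.{0} s) = #s := Cardinal.lift_mk_shrink'' (↥s)
  exact Cardinal.lift_lt.mp (by rw [h2]; exact hs)

lemma aux_succ_lt {κ : Cardinal.{0}} (h : ℵ₀ ≤ κ) {a : Ordinal.{0}} (ha : a < κ.ord) :
    a + 1 < κ.ord := by
  rw [Ordinal.add_one_eq_succ]; exact (Cardinal.isSuccLimit_ord h).succ_lt ha

lemma aux_lift_isRegular {κ : Cardinal.{0}} (hreg : κ.IsRegular) :
    (Cardinal.lift.{1} κ).IsRegular := by
  constructor
  · rw [← Cardinal.lift_aleph0.{1,0}]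
    exact Cardinal.lift_le.mpr hreg.1
  · rw [← Cardinal.lift_ord, ← Ordinal.lift_cof, hreg.cof_eq]

/-- Transfinite iteration of `fun o => max (o+1) (M o)` (with sups at limits). -/
def iterA (M : Ordinal.{0} → Ordinal.{0}) : Ordinal.{0} → Ordinal.{0} :=
  Ordinal.lt_wf.fix (fun i rec =>
    sSup (Set.range (fun j : Iio i => max (rec j.1 j.2 + 1) (M (rec j.1 j.2)))))

lemma iterA_def (M : Ordinal.{0} → Ordinal.{0}) (i : Ordinal.{0}) : iterA M i =
    sSup (Set.range (fun j : Iio i => max (iterA M j.1 + 1) (M (iterA M j.1)))) := by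
  unfold iterA
  exact Ordinal.lt_wf.fix_eq _ _

lemma le_iterA {M : Ordinal.{0} → Ordinal.{0}} {j i : Ordinal.{0}} (h : j < i) :
    max (iterA M j + 1) (M (iterA M j)) ≤ iterA M i := by
  rw [iterA_def M i]
  exact le_csSup Ordinal.bddAbove_of_small ⟨⟨j, h⟩, rfl⟩

lemma iterA_strictMono (M : Ordinal.{0} → Ordinal.{0}) : StrictMono (iterA M) := by
  intro j i h
  have h1 : iterA M j < iterA M j + 1 := by
    rw [Ordinal.add_one_eq_succ]; exact Order.lt_succ _
  exact h1.trans_le ((le_max_left _ _).trans (le_iterA h))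

lemma M_le_iterA {M : Ordinal.{0} → Ordinal.{0}} {j i : Ordinal.{0}} (h : j < i) :
    M (iterA M j) ≤ iterA M i :=
  (le_max_right _ _).trans (le_iterA h)

lemma iterA_lt_ord {κ : Cardinal.{0}} (hreg : κ.IsRegular) {M : Ordinal.{0} → Ordinal.{0}}
    (hM : ∀ β < κ.ord, M β < κ.ord) : ∀ i < κ.ord, iterA M i < κ.ord := by
  intro i
  induction i using Ordinal.induction with
  | h i IH =>
    intro hi
    rw [iterA_def]
    apply aux_sSup_lt_ord hreg
    · calc #(Set.range (fun j : Iio i => max (iterA M j.1 + 1) (M (iterA M j.1))))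
          ≤ #(Iio i) := mk_range_le
        _ = Cardinal.lift.{1} i.card := Ordinal.mk_Iio_ordinal i
        _ < Cardinal.lift.{1} κ := Cardinal.lift_lt.mpr (Cardinal.lt_ord.mp hi)
    · rintro o ⟨⟨j, hj⟩, rfl⟩
      have h1 := IH j hj (hj.trans hi)
      exact max_lt (aux_succ_lt hreg.1 h1) (hM _ h1)

/-- A choice-surjection from `Iio κ.ord` onto a set `S` of ordinals of size `< κ`. -/
def auxmf (κ : Cardinal.{0}) (S : Set Ordinal.{0}) : Ordinal.{0} → Ordinal.{0} :=
  if hh : Nonempty (↥S ↪ ↥(Iio κ.ord)) then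
    (fun i => if hi : ∃ s : ↥S, ((hh.some s : ↥(Iio κ.ord)) : Ordinal) = i then
      (hi.choose : Ordinal) else 0)
  else fun _ => 0

lemma auxmf_surj {κ : Cardinal.{0}} {S : Set Ordinal.{0}} (hS : #S < Cardinal.lift.{1} κ) :
    ∀ ξ ∈ S, ∃ i, i < κ.ord ∧ auxmf κ S i = ξ := by
  have hle : #↥S ≤ #↥(Iio κ.ord) := by
    rw [Ordinal.mk_Iio_ordinal, Cardinal.card_ord]
    exact hS.le
  have hne : Nonempty (↥S ↪ ↥(Iio κ.ord)) := (Cardinal.le_def _ _).mp hle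
  intro ξ hξ
  refine ⟨((hne.some ⟨ξ, hξ⟩ : ↥(Iio κ.ord)) : Ordinal), (hne.some ⟨ξ, hξ⟩).2, ?_⟩
  rw [auxmf, dif_pos hne]
  have hex : ∃ s : ↥S, ((hne.some s : ↥(Iio κ.ord)) : Ordinal) =
      ((hne.some ⟨ξ, hξ⟩ : ↥(Iio κ.ord)) : Ordinal) := ⟨⟨ξ, hξ⟩, rfl⟩
  rw [dif_pos hex]
  have h2 : hex.choose = (⟨ξ, hξ⟩ : ↥S) := hne.some.injective (Subtype.ext hex.choose_spec)
  rw [h2]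

/-- The least index mapping to `ξ`. -/
def auxleast (κ : Cardinal.{0}) (S : Set Ordinal.{0}) (ξ : Ordinal.{0}) : Ordinal.{0} :=
  sInf {i | auxmf κ S i = ξ}

lemma auxleast_spec {κ : Cardinal.{0}} {S : Set Ordinal.{0}} (hS : #S < Cardinal.lift.{1} κ)
    {ξ : Ordinal.{0}} (hξ : ξ ∈ S) :
    auxmf κ S (auxleast κ S ξ) = ξ ∧ auxleast κ S ξ < κ.ord := by
  obtain ⟨i, hi, hmi⟩ := auxmf_surj hS ξ hξ
  have hmem : auxleast κ S ξ ∈ {i | auxmf κ S i = ξ} :=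
    csInf_mem (s := {i | auxmf κ S i = ξ}) ⟨i, hmi⟩
  exact ⟨hmem, lt_of_le_of_lt (csInf_le (OrderBot.bddBelow _) (by exact hmi)) hi⟩

end Aux17

end PaperFormal

namespace PaperFormal

noncomputable section Aux17b

open Classical

/-- A witness family for `domBar` with the right cardinality exists. -/
lemma exists_domBar_witness (κ : Cardinal.{0}) (hreg : κ.IsRegular) :
    ∃ X : Set (Ordinal.{0} → Ordinal.{0}),
      (X ⊆ funOn κ ∧ ∀ g ∈ funOn κ, ∃ x ⊆ X, x.Nonempty ∧ #x < Cardinal.lift.{1} κ ∧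
        ∀ α < κ.ord, g α < sSup {o | ∃ f ∈ x, f α = o}) ∧
      Cardinal.lift.{1} (domBar κ) = #X := by
  have hκ0 : (0 : Ordinal) < κ.ord := by
    have := Cardinal.isSuccLimit_ord hreg.1
    exact this.pos
  set P : Set (Ordinal.{0} → Ordinal.{0}) → Prop := fun F => F ⊆ funOn κ ∧
    ∀ g ∈ funOn κ, ∃ x ⊆ F, x.Nonempty ∧ #x < Cardinal.lift.{1} κ ∧
      ∀ α < κ.ord, g α < sSup {o | ∃ f ∈ x, f α = o} with hP
  set C : Set Cardinal.{0} := {c | ∃ F, P F ∧ Cardinal.lift.{1} c = #F} with hC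
  have hCne : C.Nonempty := by
    set enc : (↥(Iio κ.ord) → ↥(Iio κ.ord)) → (Ordinal.{0} → Ordinal.{0}) :=
      fun g => (fun α => if h : α < κ.ord then (g ⟨α, h⟩ : Ordinal) else 0) with henc
    have hencinj : Function.Injective enc := by
      intro g g' hgg
      funext α
      have h3 := congrFun hgg (α : Ordinal)
      simp only [henc, dif_pos (show (α : Ordinal) < κ.ord from α.2)] at h3
      exact Subtype.ext h3
    set X₀ : Set (Ordinal.{0} → Ordinal.{0}) := Set.range enc with hX₀
    refine ⟨κ ^ κ, X₀, ⟨?_, ?_⟩, ?_⟩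
    · rintro f ⟨g, rfl⟩
      intro α hα
      simp only [henc, dif_pos hα]
      exact (g ⟨α, hα⟩).2
    · intro g hg
      refine ⟨{enc (fun α : ↥(Iio κ.ord) =>
          ⟨g (α : Ordinal) + 1, aux_succ_lt hreg.1 (hg _ α.2)⟩)}, ?_, Set.singleton_nonempty _,
          ?_, ?_⟩
      · rw [Set.singleton_subset_iff, hX₀]
        exact ⟨fun α => ⟨g (α : Ordinal) + 1, aux_succ_lt hreg.1 (hg _ α.2)⟩, rfl⟩
      · rw [Cardinal.mk_singleton]
        exact lt_of_lt_of_le Cardinal.one_lt_aleph0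
          (by rw [← Cardinal.lift_aleph0.{1,0}]; exact Cardinal.lift_le.mpr hreg.1)
      · intro α hα
        set f1 := enc (fun α : ↥(Iio κ.ord) =>
          ⟨g (α : Ordinal) + 1, aux_succ_lt hreg.1 (hg _ α.2)⟩) with hf1
        have hset : {o | ∃ f ∈ ({f1} : Set (Ordinal.{0} → Ordinal.{0})), f α = o}
            = {f1 α} := by
          ext o
          simp only [Set.mem_setOf_eq, Set.mem_singleton_iff]
          constructor
          · rintro ⟨f, hf, rfl⟩
            have hff : f = f1 := hf
            rw [hff]
          · rintro rfl; exact ⟨f1, rfl, rfl⟩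
        rw [hset, csSup_singleton]
        have h4 : f1 α = g α + 1 := by
          rw [hf1, henc]
          simp only [dif_pos hα]
        rw [h4, Ordinal.add_one_eq_succ]
        exact Order.lt_succ _
    · rw [hX₀, Cardinal.mk_range_eq _ hencinj]
      have h1 : #(↥(Iio κ.ord) → ↥(Iio κ.ord)) = (#↥(Iio κ.ord)) ^ (#↥(Iio κ.ord)) :=
        (Cardinal.power_def _ _).symm
      rw [h1, Ordinal.mk_Iio_ordinal, Cardinal.card_ord, ← Cardinal.lift_power]
  have hmem : sInf C ∈ C := csInf_mem hCne
  have : domBar κ = sInf C := rfl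
  rw [this]
  obtain ⟨X, hPX, hcard⟩ := hmem
  exact ⟨X, hPX, hcard⟩

end Aux17b

end PaperFormal
namespace PaperFormal

noncomputable section Aux17c

open Classical

/-- From `ρ ∈ Kset κ lam` we extract a `ρ`-indexed "thin" family of small subsets of
`Iio lam.ord` avoiding `Iio κ.ord`. -/
lemma exists_highThin (κ lam ρ : Cardinal.{0}) (hreg : κ.IsRegular)
    (hlt : κ < lam) (hρ : ρ ∈ Kset κ lam) :
    ∃ eb : Ordinal.{0} → Set Ordinal.{0},
      (∀ ξ, ξ < ρ.ord → (eb ξ ⊆ Iio lam.ord ∧ (∀ γ ∈ eb ξ, ¬ γ < κ.ord) ∧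
        #(eb ξ) < Cardinal.lift.{1} κ)) ∧
      (∀ h : Set Ordinal.{0}, h ⊆ Iio lam.ord → #h < Cardinal.lift.{1} κ →
        #{ξ : Ordinal.{0} | ξ < ρ.ord ∧ eb ξ ⊆ h} < Cardinal.lift.{1} κ) := by
  obtain ⟨hlamρ, T₀, hT₀sub, hT₀card, hT₀thin⟩ := hρ
  have haleph : ℵ₀ ≤ lam := hreg.1.trans hlt.le
  -- embedding of `Iio lam.ord` into the high part
  have hdiffcard : #↥(Iio lam.ord) ≤ #↥(Iio lam.ord \ Iio κ.ord) := by
    by_contra hcon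
    push_neg at hcon
    have hsub : Iio lam.ord ⊆ (Iio lam.ord \ Iio κ.ord) ∪ Iio κ.ord := by
      intro γ hγ
      by_cases hc : γ < κ.ord
      · exact Or.inr hc
      · exact Or.inl ⟨hγ, hc⟩
    have h1 : #↥(Iio lam.ord) ≤ #↥(Iio lam.ord \ Iio κ.ord) + #↥(Iio κ.ord) :=
      (Cardinal.mk_le_mk_of_subset hsub).trans (Cardinal.mk_union_le _ _)
    have h2 : #↥(Iio lam.ord) = Cardinal.lift.{1} lam := by
      rw [Ordinal.mk_Iio_ordinal, Cardinal.card_ord]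
    have h3 : #↥(Iio κ.ord) = Cardinal.lift.{1} κ := by
      rw [Ordinal.mk_Iio_ordinal, Cardinal.card_ord]
    rw [h2] at h1 hcon
    rw [h3] at h1
    have h4 : #↥(Iio lam.ord \ Iio κ.ord) + Cardinal.lift.{1} κ < Cardinal.lift.{1} lam := by
      apply Cardinal.add_lt_of_lt
      · rw [← Cardinal.lift_aleph0.{1,0}]; exact Cardinal.lift_le.mpr haleph
      · exact hcon
      · exact Cardinal.lift_lt.mpr hlt
    exact absurd (h1.trans_lt h4) (lt_irrefl _)
  obtain ⟨jemb⟩ := (Cardinal.le_def _ _).mp hdiffcard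
  set jfun : Ordinal.{0} → Ordinal.{0} := fun γ =>
    if h : γ < lam.ord then ((jemb ⟨γ, h⟩ : ↥(Iio lam.ord \ Iio κ.ord)) : Ordinal) else 0
    with hjfun
  have hjmem : ∀ γ, γ < lam.ord → jfun γ ∈ Iio lam.ord \ Iio κ.ord := by
    intro γ hγ
    rw [hjfun]
    simp only [dif_pos hγ]
    exact (jemb ⟨γ, hγ⟩).2
  have hjinj : ∀ γ γ', γ < lam.ord → γ' < lam.ord → jfun γ = jfun γ' → γ = γ' := by
    intro γ γ' hγ hγ' hj
    rw [hjfun] at hj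
    simp only [dif_pos hγ, dif_pos hγ'] at hj
    have := jemb.injective (Subtype.ext hj)
    exact congrArg Subtype.val this
  -- enumeration of T₀
  have hcard2 : #↥(Iio ρ.ord) = #↥T₀ := by
    rw [Ordinal.mk_Iio_ordinal, Cardinal.card_ord, hT₀card]
  obtain ⟨e₀⟩ := Cardinal.eq.mp hcard2
  refine ⟨fun ξ => if h : ξ < ρ.ord then jfun '' ((e₀ ⟨ξ, h⟩ : ↥T₀) : Set Ordinal) else ∅,
    ?_, ?_⟩
  · intro ξ hξ
    simp only [dif_pos hξ]
    have hT : ((e₀ ⟨ξ, hξ⟩ : ↥T₀) : Set Ordinal) ∈ smallSet κ lam := hT₀sub (e₀ ⟨ξ, hξ⟩).2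
    refine ⟨?_, ?_, ?_⟩
    · rintro γ ⟨γ', hγ', rfl⟩
      exact (hjmem γ' (hT.1 hγ')).1
    · rintro γ ⟨γ', hγ', rfl⟩
      exact (hjmem γ' (hT.1 hγ')).2
    · exact lt_of_le_of_lt Cardinal.mk_image_le hT.2
  · intro h hhsub hhcard
    set a' : Set Ordinal.{0} := {γ | γ < lam.ord ∧ jfun γ ∈ h} with ha'
    have ha'small : a' ∈ smallSet κ lam := by
      constructor
      · intro γ hγ; exact hγ.1
      · have hinj : Function.Injective (fun γ : ↥a' => (⟨jfun γ, γ.2.2⟩ : ↥h)) := by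
          intro γ γ' hgg
          have := congrArg Subtype.val hgg
          exact Subtype.ext (hjinj _ _ γ.2.1 γ'.2.1 this)
        exact lt_of_le_of_lt (Function.Embedding.cardinal_le ⟨_, hinj⟩) hhcard
    have hinj2 : Function.Injective (fun ξ : ↥{ξ : Ordinal.{0} | ξ < ρ.ord ∧
        (if h' : ξ < ρ.ord then jfun '' ((e₀ ⟨ξ, h'⟩ : ↥T₀) : Set Ordinal) else ∅) ⊆ h} =>
        (⟨(e₀ ⟨ξ.1, ξ.2.1⟩ : ↥T₀), by
          constructor
          · exact (e₀ ⟨ξ.1, ξ.2.1⟩).2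
          · -- e₀ ξ ⊆ a'
            intro γ hγ
            have hsub2 := ξ.2.2
            simp only [dif_pos ξ.2.1] at hsub2
            have hγlam : γ < lam.ord := (hT₀sub (e₀ ⟨ξ.1, ξ.2.1⟩).2).1 hγ
            exact ⟨hγlam, hsub2 ⟨γ, hγ, rfl⟩⟩⟩ : ↥{t ∈ T₀ | t ⊆ a'})) := by
      intro ξ ξ' hgg
      have h5 : (e₀ ⟨ξ.1, ξ.2.1⟩ : ↥T₀) = (e₀ ⟨ξ'.1, ξ'.2.1⟩ : ↥T₀) := by
        have := congrArg Subtype.val hgg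
        exact Subtype.ext this
      have h6 := e₀.injective h5
      have h7 := Subtype.ext_iff.mp h6
      exact Subtype.ext h7
    exact lt_of_le_of_lt (Function.Embedding.cardinal_le ⟨_, hinj2⟩) (hT₀thin a' ha'small)

end Aux17c

end PaperFormal
namespace PaperFormal

noncomputable section Aux17d

open Classical

/-- The set of codes whose attached set is contained in `h`. -/
def pSset (ρ : Cardinal.{0}) (eb : Ordinal.{0} → Set Ordinal.{0}) (h : Set Ordinal.{0}) :
    Set Ordinal.{0} :=
  {ξ | ξ < ρ.ord ∧ eb ξ ⊆ h}

/-- The "sup of attached functions" operator. -/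
def pM (πs : Ordinal.{0} → Ordinal.{0} → Ordinal.{0}) (S : Set Ordinal.{0}) :
    Ordinal.{0} → Ordinal.{0} :=
  fun β => sSup (insert (β + 1) ((fun ξ => πs ξ β) '' S))

/-- The iterated climbing function. -/
def pαf (πs : Ordinal.{0} → Ordinal.{0} → Ordinal.{0}) (S : Set Ordinal.{0}) :
    Ordinal.{0} → Ordinal.{0} :=
  iterA (pM πs S)

/-- Number of steps needed to see every element of `S`. -/
def pσ (κ : Cardinal.{0}) (S : Set Ordinal.{0}) : Ordinal.{0} :=
  sSup ((fun ξ => auxleast κ S ξ + 1) '' S)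

def plowT (κ : Cardinal.{0}) (πs : Ordinal.{0} → Ordinal.{0} → Ordinal.{0})
    (S : Set Ordinal.{0}) : Ordinal.{0} :=
  pαf πs S (pσ κ S)

/-- The high part of `b`. -/
def phib (κ : Cardinal.{0}) (b : Set Ordinal.{0}) : Set Ordinal.{0} :=
  b ∩ {γ | ¬ γ < κ.ord}

/-- The cofinal set `A` of self-balanced sets. -/
def pA (κ lam ρ : Cardinal.{0}) (πs : Ordinal.{0} → Ordinal.{0} → Ordinal.{0})
    (eb : Ordinal.{0} → Set Ordinal.{0}) : Set (Set Ordinal.{0}) :=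
  {b | b ∈ smallSet κ lam ∧
    b ∩ Iio κ.ord = Iic (plowT κ πs (pSset ρ eb (phib κ b)))}

/-- Decoding an ordinal to its interval index. -/
def pdec (πs : Ordinal.{0} → Ordinal.{0} → Ordinal.{0}) (S : Set Ordinal.{0})
    (η : Ordinal.{0}) : Ordinal.{0} :=
  sSup {i | pαf πs S i ≤ η}

/-- The coloring. -/
def pF (κ ρ : Cardinal.{0}) (πs : Ordinal.{0} → Ordinal.{0} → Ordinal.{0})
    (eb : Ordinal.{0} → Set Ordinal.{0}) : Ordinal.{0} → Set Ordinal.{0} → Ordinal.{0} :=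
  fun η b =>
    if auxmf κ (pSset ρ eb (phib κ b)) (pdec πs (pSset ρ eb (phib κ b)) η) < ρ.ord
    then auxmf κ (pSset ρ eb (phib κ b)) (pdec πs (pSset ρ eb (phib κ b)) η) else 0

lemma aux_bddAbove {s : Set Ordinal.{0}} {o : Ordinal.{0}} (h : s ⊆ Iio o) : BddAbove s := by
  haveI := small_subset h
  exact Ordinal.bddAbove_of_small

lemma pM_lt {κ : Cardinal.{0}} (hreg : κ.IsRegular)
    {πs : Ordinal.{0} → Ordinal.{0} → Ordinal.{0}}
    (hπ : ∀ ξ α, α < κ.ord → πs ξ α < κ.ord) {S : Set Ordinal.{0}}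
    (hS : #S < Cardinal.lift.{1} κ) :
    ∀ β < κ.ord, pM πs S β < κ.ord := by
  intro β hβ
  apply aux_sSup_lt_ord hreg
  · calc #↥(insert (β + 1) ((fun ξ => πs ξ β) '' S))
        ≤ #↥((fun ξ => πs ξ β) '' S) + 1 := Cardinal.mk_insert_le
      _ ≤ #S + 1 := by
          gcongr
          exact Cardinal.mk_image_le
      _ < Cardinal.lift.{1} κ := by
          apply Cardinal.add_lt_of_lt
          · rw [← Cardinal.lift_aleph0.{1,0}]; exact Cardinal.lift_le.mpr hreg.1
          · exact hS
          · exact lt_of_lt_of_le Cardinal.one_lt_aleph0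
              (by rw [← Cardinal.lift_aleph0.{1,0}]; exact Cardinal.lift_le.mpr hreg.1)
  · intro o ho
    rcases ho with ho | ⟨ξ, _, rfl⟩
    · rw [ho]; exact aux_succ_lt hreg.1 hβ
    · exact hπ _ _ hβ

lemma pM_mem_le {κ : Cardinal.{0}} {πs : Ordinal.{0} → Ordinal.{0} → Ordinal.{0}}
    (hπ : ∀ ξ α, α < κ.ord → πs ξ α < κ.ord) {S : Set Ordinal.{0}} {β : Ordinal.{0}}
    (hβ : β < κ.ord) {ξ : Ordinal.{0}} (hξ : ξ ∈ S) : πs ξ β ≤ pM πs S β := by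
  apply le_csSup
  · apply aux_bddAbove (o := κ.ord + 1)
    intro o ho
    rcases ho with ho | ⟨ξ', _, rfl⟩
    · rw [ho, Ordinal.add_one_eq_succ, Ordinal.add_one_eq_succ]
      exact Order.succ_lt_succ hβ
    · rw [Ordinal.add_one_eq_succ]
      exact (hπ _ _ hβ).trans (Order.lt_succ _)
  · exact Set.mem_insert_of_mem _ ⟨ξ, hξ, rfl⟩

lemma pσ_pos_le {κ : Cardinal.{0}} (hreg : κ.IsRegular) {S : Set Ordinal.{0}}
    (hS : #S < Cardinal.lift.{1} κ) {ξ : Ordinal.{0}} (hξ : ξ ∈ S) :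
    auxleast κ S ξ + 1 ≤ pσ κ S := by
  apply le_csSup
  · apply aux_bddAbove (o := κ.ord)
    rintro o ⟨ξ', hξ', rfl⟩
    exact aux_succ_lt hreg.1 (auxleast_spec hS hξ').2
  · exact ⟨ξ, hξ, rfl⟩

lemma pσ_lt {κ : Cardinal.{0}} (hreg : κ.IsRegular) {S : Set Ordinal.{0}}
    (hS : #S < Cardinal.lift.{1} κ) : pσ κ S < κ.ord := by
  apply aux_sSup_lt_ord hreg
  · exact lt_of_le_of_lt Cardinal.mk_image_le hS
  · rintro o ⟨ξ', hξ', rfl⟩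
    exact aux_succ_lt hreg.1 (auxleast_spec hS hξ').2

lemma plowT_lt {κ : Cardinal.{0}} (hreg : κ.IsRegular)
    {πs : Ordinal.{0} → Ordinal.{0} → Ordinal.{0}}
    (hπ : ∀ ξ α, α < κ.ord → πs ξ α < κ.ord) {S : Set Ordinal.{0}}
    (hS : #S < Cardinal.lift.{1} κ) : plowT κ πs S < κ.ord :=
  iterA_lt_ord hreg (pM_lt hreg hπ hS) _ (pσ_lt hreg hS)

lemma pdec_eq {πs : Ordinal.{0} → Ordinal.{0} → Ordinal.{0}} {S : Set Ordinal.{0}}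
    {η i₀ : Ordinal.{0}} (h1 : pαf πs S i₀ ≤ η) (h2 : η < pαf πs S (i₀ + 1)) :
    pdec πs S η = i₀ := by
  apply IsGreatest.csSup_eq
  constructor
  · exact h1
  · intro i hi
    by_contra hcon
    push_neg at hcon
    have h3 : i₀ + 1 ≤ i := by
      rw [Ordinal.add_one_eq_succ]; exact Order.succ_le_of_lt hcon
    have h4 : pαf πs S (i₀ + 1) ≤ pαf πs S i := (iterA_strictMono _).monotone h3
    exact absurd ((h4.trans hi).trans_lt h2) (lt_irrefl _)

lemma iterA_zero (M : Ordinal.{0} → Ordinal.{0}) : iterA M 0 = 0 := by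
  rw [iterA_def]
  have h1 : Set.range (fun j : Iio (0 : Ordinal.{0}) =>
      max (iterA M j.1 + 1) (M (iterA M j.1))) = ∅ := by
    apply Set.range_eq_empty_iff.mpr
    constructor
    intro j
    exact absurd j.2 (not_lt_of_ge (zero_le (a := j.1)))
  rw [h1, csSup_empty]
  rfl

lemma supK_lt {κ lam : Cardinal.{0}} (hreg : κ.IsRegular) {a : Set Ordinal.{0}}
    (ha : a ∈ smallSet κ lam) : supK κ a < κ.ord := by
  apply aux_sSup_lt_ord hreg
  · exact lt_of_le_of_lt (Cardinal.mk_le_mk_of_subset Set.inter_subset_left) ha.2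
  · intro o ho
    exact ho.2

end Aux17d

end PaperFormal
namespace PaperFormal

noncomputable section Aux17e

open Classical

lemma aux_mk_Iic_lt {κ : Cardinal.{0}} (hreg : κ.IsRegular) {γ : Ordinal.{0}}
    (hγ : γ < κ.ord) : #↥(Iic γ) < Cardinal.lift.{1} κ := by
  have h1 : Iic γ = Iio (γ + 1) := by
    rw [Ordinal.add_one_eq_succ, Order.Iio_succ]
  rw [h1, Ordinal.mk_Iio_ordinal]
  exact Cardinal.lift_lt.mpr (Cardinal.lt_ord.mp (aux_succ_lt hreg.1 hγ))

/-- Cofinality of `pA`: every small set extends to a member of `pA`. -/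
lemma pA_cofinal {κ lam ρ : Cardinal.{0}} (hreg : κ.IsRegular) (hlt : κ < lam)
    {πs : Ordinal.{0} → Ordinal.{0} → Ordinal.{0}}
    (hπ : ∀ ξ α, α < κ.ord → πs ξ α < κ.ord)
    {eb : Ordinal.{0} → Set Ordinal.{0}}
    (hebp : ∀ ξ, ξ < ρ.ord → (eb ξ ⊆ Iio lam.ord ∧ (∀ γ ∈ eb ξ, ¬ γ < κ.ord) ∧
      #(eb ξ) < Cardinal.lift.{1} κ))
    (hthin : ∀ h : Set Ordinal.{0}, h ⊆ Iio lam.ord → #h < Cardinal.lift.{1} κ →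
      #(pSset ρ eb h) < Cardinal.lift.{1} κ)
    (hunb : ∀ β < κ.ord, ∃ ξ, ξ < ρ.ord ∧ β < πs ξ 0) :
    ∀ a ∈ smallSet κ lam, ∃ b ∈ pA κ lam ρ πs eb, a ⊆ b := by
  intro a ha
  have hκord : (0:Ordinal) < κ.ord := (Cardinal.isSuccLimit_ord hreg.1).pos
  have hκlam : κ.ord ≤ lam.ord := Cardinal.ord_le_ord.mpr hlt.le
  have hliftaleph : ℵ₀ ≤ Cardinal.lift.{1} κ := by
    rw [← Cardinal.lift_aleph0.{1,0}]; exact Cardinal.lift_le.mpr hreg.1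
  -- the sup of the low part of a
  set β₀ : Ordinal.{0} := sSup (a ∩ Iio κ.ord) with hβ₀
  have hβ₀lt : β₀ < κ.ord := by
    apply aux_sSup_lt_ord hreg
    · exact lt_of_le_of_lt (Cardinal.mk_le_mk_of_subset Set.inter_subset_left) ha.2
    · exact fun o ho => ho.2
  obtain ⟨ξ₀, hξ₀ρ, hξ₀big⟩ := hunb β₀ hβ₀lt
  set h : Set Ordinal.{0} := (a ∩ {γ | ¬ γ < κ.ord}) ∪ eb ξ₀ with hh
  have hhsub : h ⊆ Iio lam.ord := by
    rintro γ (⟨hγ1, _⟩ | hγ2)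
    · exact ha.1 hγ1
    · exact (hebp ξ₀ hξ₀ρ).1 hγ2
  have hhhigh : ∀ γ ∈ h, ¬ γ < κ.ord := by
    rintro γ (⟨_, hγ1⟩ | hγ2)
    · exact hγ1
    · exact (hebp ξ₀ hξ₀ρ).2.1 γ hγ2
  have hhcard : #h < Cardinal.lift.{1} κ := by
    apply lt_of_le_of_lt (Cardinal.mk_union_le _ _)
    apply Cardinal.add_lt_of_lt hliftaleph
    · exact lt_of_le_of_lt (Cardinal.mk_le_mk_of_subset Set.inter_subset_left) ha.2
    · exact (hebp ξ₀ hξ₀ρ).2.2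
  set S : Set Ordinal.{0} := pSset ρ eb h with hS
  have hScard : #S < Cardinal.lift.{1} κ := hthin h hhsub hhcard
  have hξ₀S : ξ₀ ∈ S := ⟨hξ₀ρ, Set.subset_union_right⟩
  set lowT : Ordinal.{0} := plowT κ πs S with hlowT
  have hlowTlt : lowT < κ.ord := plowT_lt hreg hπ hScard
  have hβ₀lowT : β₀ < lowT := by
    have h1 : πs ξ₀ 0 ≤ pM πs S 0 := pM_mem_le hπ hκord hξ₀S
    have h2 : (0:Ordinal) < pσ κ S := by
      have := pσ_pos_le hreg hScard hξ₀S
      have h3 : (0:Ordinal) < auxleast κ S ξ₀ + 1 := by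
        rw [Ordinal.add_one_eq_succ]
        exact Order.bot_lt_succ _
      exact h3.trans_le this
    have h4 : pM πs S (iterA (pM πs S) 0) ≤ iterA (pM πs S) (pσ κ S) := M_le_iterA h2
    rw [iterA_zero] at h4
    calc β₀ < πs ξ₀ 0 := hξ₀big
      _ ≤ pM πs S 0 := h1
      _ ≤ iterA (pM πs S) (pσ κ S) := h4
  set b : Set Ordinal.{0} := h ∪ Iic lowT with hb
  have hphib : phib κ b = h := by
    rw [phib, hb]
    ext γ
    constructor
    · rintro ⟨hγ1 | hγ1, hγ2⟩
      · exact hγ1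
      · exact absurd (lt_of_le_of_lt hγ1 hlowTlt) hγ2
    · intro hγ
      exact ⟨Or.inl hγ, hhhigh γ hγ⟩
  have hblow : b ∩ Iio κ.ord = Iic lowT := by
    rw [hb]
    ext γ
    constructor
    · rintro ⟨hγ1 | hγ1, hγ2⟩
      · exact absurd hγ2 (hhhigh γ hγ1)
      · exact hγ1
    · intro hγ
      exact ⟨Or.inr hγ, lt_of_le_of_lt hγ hlowTlt⟩
  have hbsmall : b ∈ smallSet κ lam := by
    constructor
    · rintro γ (hγ | hγ)
      · exact hhsub hγ
      · exact lt_of_lt_of_le (lt_of_le_of_lt hγ hlowTlt) hκlam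
    · apply lt_of_le_of_lt (Cardinal.mk_union_le _ _)
      exact Cardinal.add_lt_of_lt hliftaleph hhcard (aux_mk_Iic_lt hreg hlowTlt)
  refine ⟨b, ⟨hbsmall, ?_⟩, ?_⟩
  · rw [hphib, hblow, ← hS, ← hlowT]
  · intro γ hγ
    by_cases hγκ : γ < κ.ord
    · have h5 : γ ≤ β₀ := by
        apply le_csSup
        · exact aux_bddAbove (o := κ.ord) (fun o ho => ho.2)
        · exact ⟨hγ, hγκ⟩
      exact Or.inr (h5.trans hβ₀lowT.le)
    · exact Or.inl (Or.inl ⟨hγ, hγκ⟩)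

end Aux17e

end PaperFormal
namespace PaperFormal

noncomputable section Aux17f

open Classical

/-- Main surjectivity: on every cofinal `B ⊆ pA`, the coloring `pF` attains every value. -/
lemma pF_onto {κ lam ρ : Cardinal.{0}} (hreg : κ.IsRegular) (hlt : κ < lam)
    {πs : Ordinal.{0} → Ordinal.{0} → Ordinal.{0}}
    (hπ : ∀ ξ α, α < κ.ord → πs ξ α < κ.ord)
    {eb : Ordinal.{0} → Set Ordinal.{0}}
    (hebp : ∀ ξ, ξ < ρ.ord → (eb ξ ⊆ Iio lam.ord ∧ (∀ γ ∈ eb ξ, ¬ γ < κ.ord) ∧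
      #(eb ξ) < Cardinal.lift.{1} κ))
    (hthin : ∀ h : Set Ordinal.{0}, h ⊆ Iio lam.ord → #h < Cardinal.lift.{1} κ →
      #(pSset ρ eb h) < Cardinal.lift.{1} κ)
    (hdom : ∀ g ∈ funOn κ, ∃ cs : Set Ordinal.{0}, cs.Nonempty ∧ (∀ ξ ∈ cs, ξ < ρ.ord) ∧
      #cs < Cardinal.lift.{1} κ ∧ ∀ α < κ.ord, g α < sSup ((fun ξ => πs ξ α) '' cs))
    (B : Set (Set Ordinal.{0})) (hBsub : B ⊆ smallSet κ lam)
    (hBcof : ∀ a ∈ smallSet κ lam, ∃ b ∈ B, a ⊆ b)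
    (hBA : B ⊆ pA κ lam ρ πs eb) :
    ∀ ξstar < ρ.ord, ∃ p ∈ pairsK κ B, pF κ ρ πs eb p.1 p.2 = ξstar := by
  intro ξstar hξstarρ
  have hκlam : κ.ord ≤ lam.ord := Cardinal.ord_le_ord.mpr hlt.le
  have hliftaleph : ℵ₀ ≤ Cardinal.lift.{1} κ := by
    rw [← Cardinal.lift_aleph0.{1,0}]; exact Cardinal.lift_le.mpr hreg.1
  -- the set of realized supK values
  set E : Set Ordinal.{0} := {o | ∃ a ∈ B, supK κ a = o} with hE
  have hEκ : ∀ o ∈ E, o < κ.ord := by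
    rintro o ⟨a, haB, rfl⟩
    exact supK_lt hreg (hBsub haB)
  have hEunb : ∀ β < κ.ord, ∃ o ∈ E, β < o := by
    intro β hβ
    have hsing : ({β + 1} : Set Ordinal.{0}) ∈ smallSet κ lam := by
      constructor
      · intro γ hγ
        rw [hγ]
        exact lt_of_lt_of_le (aux_succ_lt hreg.1 hβ) hκlam
      · rw [Cardinal.mk_singleton]
        exact lt_of_lt_of_le Cardinal.one_lt_aleph0 hliftaleph
    obtain ⟨a, haB, hsub⟩ := hBcof _ hsing
    refine ⟨supK κ a, ⟨a, haB, rfl⟩, ?_⟩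
    have h1 : β + 1 ≤ supK κ a := by
      apply le_csSup (aux_bddAbove (o := κ.ord) (fun o ho => ho.2))
      exact ⟨hsub rfl, aux_succ_lt hreg.1 hβ⟩
    have h2 : β < β + 1 := by
      rw [Ordinal.add_one_eq_succ]; exact Order.lt_succ _
    exact h2.trans_le h1
  -- next-point function of E
  set gE : Ordinal.{0} → Ordinal.{0} := fun α => sInf {o | o ∈ E ∧ α < o} with hgE
  have hgEspec : ∀ α < κ.ord, gE α ∈ E ∧ α < gE α := by
    intro α hα
    obtain ⟨o, hoE, hαo⟩ := hEunb α hα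
    exact csInf_mem (s := {o | o ∈ E ∧ α < o}) ⟨o, hoE, hαo⟩
  have hgEfun : gE ∈ funOn κ := by
    intro α hα
    exact hEκ _ (hgEspec α hα).1
  -- apply the domination family
  obtain ⟨cs, hcsne, hcsρ, hcscard, hcsdom⟩ := hdom gE hgEfun
  -- the pump request
  set r : Set Ordinal.{0} := ⋃ ξ ∈ insert ξstar cs, eb ξ with hr
  have hinsρ : ∀ ξ ∈ insert ξstar cs, ξ < ρ.ord := by
    rintro ξ (rfl | hξ)
    · exact hξstarρ
    · exact hcsρ ξ hξ
  have hrsmall : r ∈ smallSet κ lam := by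
    constructor
    · intro γ hγ
      rw [hr] at hγ
      obtain ⟨ξ, hξ, hγ2⟩ := Set.mem_iUnion₂.mp hγ
      exact (hebp ξ (hinsρ ξ hξ)).1 hγ2
    · rw [hr]
      apply lt_of_le_of_lt (Cardinal.mk_biUnion_le _ _)
      have hcard1 : #↥(insert ξstar cs) < Cardinal.lift.{1} κ := by
        apply lt_of_le_of_lt Cardinal.mk_insert_le
        apply Cardinal.add_lt_of_lt hliftaleph hcscard
        exact lt_of_lt_of_le Cardinal.one_lt_aleph0 hliftaleph
      apply Cardinal.mul_lt_of_lt hliftaleph hcard1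
      apply Cardinal.iSup_lt_of_isRegular (aux_lift_isRegular hreg) hcard1
      intro ξ
      exact (hebp ξ (hinsρ ξ ξ.2)).2.2
  obtain ⟨bb, hbbB, hrbb⟩ := hBcof _ hrsmall
  have hbbsmall : bb ∈ smallSet κ lam := hBsub hbbB
  set h : Set Ordinal.{0} := phib κ bb with hh
  have hhsub : h ⊆ Iio lam.ord := fun γ hγ => hbbsmall.1 hγ.1
  have hhcard : #h < Cardinal.lift.{1} κ :=
    lt_of_le_of_lt (Cardinal.mk_le_mk_of_subset (fun γ hγ => hγ.1)) hbbsmall.2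
  set S : Set Ordinal.{0} := pSset ρ eb h with hS
  have hScard : #S < Cardinal.lift.{1} κ := hthin h hhsub hhcard
  have hcodesS : ∀ ξ ∈ insert ξstar cs, ξ ∈ S := by
    intro ξ hξ
    refine ⟨hinsρ ξ hξ, ?_⟩
    intro γ hγ
    have hγr : γ ∈ r := by
      rw [hr]
      exact Set.mem_biUnion hξ hγ
    exact ⟨hrbb hγr, (hebp ξ (hinsρ ξ hξ)).2.1 γ hγ⟩
  have hξstarS : ξstar ∈ S := hcodesS ξstar (Set.mem_insert _ _)
  -- b̂ is in pA, so its low part is exactly Iic (plowT)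
  have hbbA : bb ∈ pA κ lam ρ πs eb := hBA hbbB
  have hlow : bb ∩ Iio κ.ord = Iic (plowT κ πs S) := by
    have := hbbA.2
    rw [← hh, ← hS] at this
    exact this
  have hsupbb : supK κ bb = plowT κ πs S := by
    rw [supK, hlow, csSup_Iic]
  -- domination transfers to pM
  have hdomS : ∀ α < κ.ord, gE α < pM πs S α := by
    intro α hα
    apply lt_of_lt_of_le (hcsdom α hα)
    apply csSup_le_csSup
    · apply aux_bddAbove (o := κ.ord + 1)
      intro o ho
      rcases ho with ho | ⟨ξ', _, rfl⟩
      · rw [ho, Ordinal.add_one_eq_succ, Ordinal.add_one_eq_succ]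
        exact Order.succ_lt_succ hα
      · rw [Ordinal.add_one_eq_succ]
        exact (hπ _ _ hα).trans (Order.lt_succ _)
    · obtain ⟨ξ, hξ⟩ := hcsne
      exact ⟨πs ξ α, ξ, hξ, rfl⟩
    · rintro o ⟨ξ, hξ, rfl⟩
      exact Set.mem_insert_of_mem _ ⟨ξ, hcodesS ξ (Set.mem_insert_of_mem _ hξ), rfl⟩
  -- the target index
  set i₀ : Ordinal.{0} := auxleast κ S ξstar with hi₀def
  obtain ⟨hi₀val, hi₀lt⟩ := auxleast_spec hScard hξstarS
  rw [← hi₀def] at hi₀val hi₀lt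
  have hαi₀ : pαf πs S i₀ < κ.ord :=
    iterA_lt_ord hreg (pM_lt hreg hπ hScard) _ hi₀lt
  set η : Ordinal.{0} := gE (pαf πs S i₀) with hη
  obtain ⟨hηE, hαη⟩ := hgEspec _ hαi₀
  have hηκ : η < κ.ord := hEκ _ hηE
  have h13 : η < pαf πs S (i₀ + 1) := by
    have h1 : η < pM πs S (pαf πs S i₀) := hdomS _ hαi₀
    have h2 : pM πs S (pαf πs S i₀) ≤ pαf πs S (i₀ + 1) := by
      apply M_le_iterA
      rw [Ordinal.add_one_eq_succ]; exact Order.lt_succ _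
    exact h1.trans_le h2
  have h14 : i₀ + 1 ≤ pσ κ S := pσ_pos_le hreg hScard hξstarS
  have h15 : pαf πs S (i₀ + 1) ≤ plowT κ πs S := (iterA_strictMono _).monotone h14
  have hηsup : η < supK κ bb := by
    rw [hsupbb]
    exact h13.trans_le h15
  have hdec : pdec πs S η = i₀ := pdec_eq hαη.le h13
  obtain ⟨a, haB, hsupa⟩ := hηE
  refine ⟨(supK κ a, bb), ⟨a, haB, bb, hbbB, ?_, rfl⟩, ?_⟩
  · rw [hsupa]
    exact hηsup
  · show pF κ ρ πs eb (supK κ a) bb = ξstar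
    rw [hsupa]
    simp only [pF]
    rw [← hh, ← hS, hdec, hi₀val, if_pos hξstarρ]

end Aux17f

end PaperFormal
namespace PaperFormal

/-- Suppose `ρ ∈ K(κ,λ)` and `ρ ≥ d̄_κ`. Then
`I_{κ,λ}⁺ ↛_κ [I_{κ,λ}⁺]_ρ²`: there are `F : [P_κ(λ)]_κ² → ρ` and `A ∈ I_{κ,λ}⁺` such that
`F''[B]_κ² = ρ` for every `B ∈ I_{κ,λ}⁺ ∩ P(A)`. -/
theorem not_sqBrP_of_ge_domBar (κ lam ρ : Cardinal.{0}) (hreg : κ.IsRegular) (huc : ℵ₀ < κ)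
    (hlt : κ < lam) (hρ : ρ ∈ Kset κ lam) (hρd : domBar κ ≤ ρ) :
    ∃ F : Ordinal.{0} → Set Ordinal.{0} → Ordinal.{0}, ∃ A : Set (Set Ordinal.{0}),
      (∀ p ∈ pairsK κ (smallSet κ lam), F p.1 p.2 < ρ.ord) ∧
      A ∈ plusOf κ lam (Ikl κ lam) ∧
      ∀ B ∈ plusOf κ lam (Ikl κ lam), B ⊆ A →
        {ξ | ∃ p ∈ pairsK κ B, F p.1 p.2 = ξ} = Iio ρ.ord := by
  classical
  have hκ0 : (0:Ordinal) < κ.ord := (Cardinal.isSuccLimit_ord hreg.1).pos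
  have hρpos : (0:Ordinal) < ρ.ord := by
    have h1 : (0:Cardinal) < ρ :=
      lt_of_lt_of_le (lt_of_lt_of_le Cardinal.aleph0_pos hreg.1) (hlt.le.trans hρ.1)
    calc (0:Ordinal) = (0:Cardinal).ord := Cardinal.ord_zero.symm
      _ < ρ.ord := Cardinal.ord_lt_ord.mpr h1
  obtain ⟨X, ⟨hXsub, hXdom⟩, hXcard⟩ := exists_domBar_witness κ hreg
  have hXle : #↥X ≤ #↥(Iio ρ.ord) := by
    rw [Ordinal.mk_Iio_ordinal, Cardinal.card_ord, ← hXcard]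
    exact Cardinal.lift_le.mpr hρd
  have hembne : Nonempty (↥X ↪ ↥(Iio ρ.ord)) := (Cardinal.le_def _ _).mp hXle
  set πs : Ordinal.{0} → Ordinal.{0} → Ordinal.{0} := fun ξ =>
    if h : ∃ fx : ↥X, ((hembne.some fx : ↥(Iio ρ.ord)) : Ordinal) = ξ then
      (h.choose : Ordinal.{0} → Ordinal.{0}) else fun _ => 0 with hπs
  have hπ0 : ∀ ξ α, α < κ.ord → πs ξ α < κ.ord := by
    intro ξ α hα
    simp only [hπs]
    by_cases h : ∃ fx : ↥X, ((hembne.some fx : ↥(Iio ρ.ord)) : Ordinal) = ξ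
    · rw [dif_pos h]
      exact hXsub h.choose.2 α hα
    · rw [dif_neg h]
      exact hκ0
  have hπsurj : ∀ f ∈ X, ∃ ξ, ξ < ρ.ord ∧ πs ξ = f := by
    intro f hf
    refine ⟨((hembne.some ⟨f, hf⟩ : ↥(Iio ρ.ord)) : Ordinal),
      (hembne.some ⟨f, hf⟩).2, ?_⟩
    simp only [hπs]
    have hex : ∃ fx : ↥X, ((hembne.some fx : ↥(Iio ρ.ord)) : Ordinal) =
        ((hembne.some ⟨f, hf⟩ : ↥(Iio ρ.ord)) : Ordinal) := ⟨⟨f, hf⟩, rfl⟩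
    rw [dif_pos hex]
    have h2 : hex.choose = (⟨f, hf⟩ : ↥X) := hembne.some.injective (Subtype.ext hex.choose_spec)
    rw [h2]
  have hunb : ∀ β < κ.ord, ∃ ξ, ξ < ρ.ord ∧ β < πs ξ 0 := by
    intro β hβ
    have hg : (fun _ : Ordinal.{0} => β) ∈ funOn κ := fun α _ => hβ
    obtain ⟨x, hxsub, hxne, _, hxdom⟩ := hXdom _ hg
    have h1 : β < sSup {o | ∃ f ∈ x, f 0 = o} := hxdom 0 hκ0
    by_contra hcon
    push_neg at hcon
    have h2 : sSup {o | ∃ f ∈ x, f 0 = o} ≤ β := by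
      apply csSup_le
      · obtain ⟨f, hf⟩ := hxne; exact ⟨f 0, f, hf, rfl⟩
      · rintro o ⟨f, hfx, rfl⟩
        obtain ⟨ξ, hξρ, hξf⟩ := hπsurj f (hxsub hfx)
        have h3 := hcon ξ hξρ
        rw [hξf] at h3
        exact h3
    exact absurd (h1.trans_le h2) (lt_irrefl _)
  have hdom : ∀ g ∈ funOn κ, ∃ cs : Set Ordinal.{0}, cs.Nonempty ∧ (∀ ξ ∈ cs, ξ < ρ.ord) ∧
      #cs < Cardinal.lift.{1} κ ∧ ∀ α < κ.ord, g α < sSup ((fun ξ => πs ξ α) '' cs) := by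
    intro g hg
    obtain ⟨x, hxsub, hxne, hxcard, hxdom⟩ := hXdom g hg
    set c : ↥x → Ordinal.{0} := fun fx => (hπsurj fx.1 (hxsub fx.2)).choose with hc
    have hcspec : ∀ fx : ↥x, c fx < ρ.ord ∧ πs (c fx) = fx.1 :=
      fun fx => (hπsurj fx.1 (hxsub fx.2)).choose_spec
    refine ⟨Set.range c, ?_, ?_, ?_, ?_⟩
    · obtain ⟨f, hf⟩ := hxne
      exact ⟨c ⟨f, hf⟩, ⟨f, hf⟩, rfl⟩
    · rintro ξ ⟨fx, rfl⟩
      exact (hcspec fx).1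
    · exact lt_of_le_of_lt Cardinal.mk_range_le hxcard
    · intro α hα
      apply lt_of_lt_of_le (hxdom α hα)
      apply csSup_le_csSup
      · apply aux_bddAbove (o := κ.ord)
        rintro o ⟨ξ, ⟨fx, rfl⟩, rfl⟩
        exact hπ0 _ _ hα
      · obtain ⟨f, hf⟩ := hxne
        exact ⟨f α, f, hf, rfl⟩
      · rintro o ⟨f, hfx, rfl⟩
        refine ⟨c ⟨f, hfx⟩, ⟨⟨f, hfx⟩, rfl⟩, ?_⟩
        show πs (c ⟨f, hfx⟩) α = f α
        rw [(hcspec ⟨f, hfx⟩).2]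
  obtain ⟨eb, hebp, hthin'⟩ := exists_highThin κ lam ρ hreg hlt hρ
  have hthin : ∀ h : Set Ordinal.{0}, h ⊆ Iio lam.ord → #h < Cardinal.lift.{1} κ →
      #(pSset ρ eb h) < Cardinal.lift.{1} κ := fun h h1 h2 => hthin' h h1 h2
  have hFbound : ∀ η b, pF κ ρ πs eb η b < ρ.ord := by
    intro η b
    rw [pF]
    split_ifs with h
    · exact h
    · exact hρpos
  refine ⟨pF κ ρ πs eb, pA κ lam ρ πs eb, ?_, ?_, ?_⟩
  · intro p _
    exact hFbound _ _
  · constructor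
    · intro b hb
      exact hb.1
    · intro hIkl
      obtain ⟨-, a, ha, hall⟩ := hIkl
      obtain ⟨b, hbA, hab⟩ := pA_cofinal hreg hlt hπ0 hebp hthin hunb a ha
      exact hall b hbA hab
  · intro B hB hBA
    have hBcof : ∀ a ∈ smallSet κ lam, ∃ b ∈ B, a ⊆ b := by
      by_contra hcon
      push_neg at hcon
      obtain ⟨a, ha, hall⟩ := hcon
      exact hB.2 ⟨hB.1, a, ha, fun b hb => hall b hb⟩
    ext ξ
    simp only [Set.mem_setOf_eq, Set.mem_Iio]
    constructor
    · rintro ⟨p, _, rfl⟩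
      exact hFbound _ _
    · intro hξ
      obtain ⟨p, hp, hval⟩ := pF_onto hreg hlt hπ0 hebp hthin hdom B hB.1 hBcof hBA ξ hξ
      exact ⟨p, hp, hval⟩

end PaperFormal
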